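/- arXiv:1305.0216 — 3 statements merged into one kernel-verified Lean document; each statement's English description precedes it below -/
import Mathlib

section
/- Let (p_n) and (q_n) be sequences of odd prime numbers with p_n ≠ q_n for all n and p_n/q_n → 1 as n → ∞, and set c_n = −(p_n⁴ − 2p_n³q_n + 2p_n²q_n² − 2p_nq_n³ + q_n⁴)/(2 p_n q_n)². Then for all sufficiently large n, the map f_{c_n}(z) = z² + c_n has exactly 6 rational preperiodic points (namely ±1/2 ± (p_n² − p_nq_n + q_n²)/(2p_nq_n) and ±(p_n² − q_n²)/(2p_nq_n)), of which exactly 2 are periodic and both are fixed points of f_{c_n}. -/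
open Filter

/-- The quadratic map `f_c(z) = z² + c`. -/
def fc (c : ℚ) : ℚ → ℚ := fun z => z ^ 2 + c

/-- `x` is preperiodic for `f_c`: its forward orbit is eventually periodic. -/
def IsPreper (c x : ℚ) : Prop := ∃ m n : ℕ, m < n ∧ (fc c)^[m] x = (fc c)^[n] x

/-- `x` is periodic for `f_c`. -/
def IsPer (c x : ℚ) : Prop := ∃ n : ℕ, 1 ≤ n ∧ (fc c)^[n] x = x

/-- Core arithmetic lemma: for primes `q < p < 2q` with `q ≥ 3`,
`t² + p·q³ = m²` with `p² + q² = 2m` is impossible. -/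
lemma nonsq (p q t m : ℕ) (hp : p.Prime) (hq : q.Prime)
    (hq3 : 3 ≤ q) (hqp : q < p) (hp2q : p < 2 * q)
    (hm2 : p ^ 2 + q ^ 2 = 2 * m) (heq : t ^ 2 + p * q ^ 3 = m ^ 2) : False := by
  have hppos : 0 < p := hp.pos
  have hqpos : 0 < q := hq.pos
  have hpq3 : 0 < p * q ^ 3 := by positivity
  have htm : t < m := by nlinarith
  have hABsum : (m - t) + (m + t) = 2 * m := by omega
  have hABZ : ((m - t : ℕ) : ℤ) * ((m + t : ℕ) : ℤ) = (p : ℤ) * (q : ℤ) ^ 3 := by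
    have hAz : ((m - t : ℕ) : ℤ) = (m : ℤ) - t := by
      push_cast [Nat.cast_sub htm.le]; ring
    have hBz : ((m + t : ℕ) : ℤ) = (m : ℤ) + t := by push_cast; ring
    have hz : (t : ℤ) ^ 2 + (p : ℤ) * q ^ 3 = (m : ℤ) ^ 2 := by exact_mod_cast heq
    rw [hAz, hBz]; linear_combination -hz
  have hAB : (m - t) * (m + t) = p * q ^ 3 := by exact_mod_cast hABZ
  have case_pq3 : p + q ^ 3 ≠ p ^ 2 + q ^ 2 := by
    intro h
    have hdvd : (p : ℤ) ∣ (q : ℤ) ^ 2 * ((q : ℤ) - 1) := by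
      have h1 : (q : ℤ) ^ 2 * ((q : ℤ) - 1) = (p : ℤ) * ((p : ℤ) - 1) := by
        have : (p : ℤ) + q ^ 3 = p ^ 2 + q ^ 2 := by exact_mod_cast h
        linear_combination this
      exact h1 ▸ Dvd.intro _ rfl
    have hpz : Prime (p : ℤ) := Nat.prime_iff_prime_int.mp hp
    rcases hpz.dvd_mul.mp hdvd with h1 | h1
    · have h2 : (p : ℤ) ∣ (q : ℤ) := hpz.dvd_of_dvd_pow h1
      have h3 : p ∣ q := by exact_mod_cast h2
      have := (Nat.prime_dvd_prime_iff_eq hp hq).mp h3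
      omega
    · have h2 : (p : ℤ) ≤ (q : ℤ) - 1 := Int.le_of_dvd (by push_cast; omega) h1
      have : (p : ℤ) ≤ (q : ℤ) := by omega
      have : p ≤ q := by exact_mod_cast this
      omega
  have case_size : p * q ^ 3 + 1 ≠ p ^ 2 + q ^ 2 := by
    intro h
    have h1 : q * q ^ 3 ≤ p * q ^ 3 := Nat.mul_le_mul_right _ hqp.le
    have h2 : q ^ 4 = q * q ^ 3 := by ring
    have h3 : p ^ 2 ≤ 4 * q ^ 2 := by
      have h31 := Nat.mul_le_mul hp2q.le hp2q.le
      have e1 : p * p = p ^ 2 := by ring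
      have e2 : 2 * q * (2 * q) = 4 * q ^ 2 := by ring
      linarith
    have h5 : 9 ≤ q ^ 2 := by
      have h51 := Nat.mul_le_mul hq3 hq3
      have e1 : q * q = q ^ 2 := by ring
      linarith
    have h6 : 9 * q ^ 2 ≤ q ^ 2 * q ^ 2 := Nat.mul_le_mul_right _ h5
    have h7 : q ^ 4 = q ^ 2 * q ^ 2 := by ring
    linarith
  have qdvd_case : ∀ (_ : (q : ℤ) ∣ (p : ℤ) ^ 2), False := by
    intro hdqz
    have hdq : q ∣ p ^ 2 := by exact_mod_cast hdqz
    have hqz : Prime (q : ℕ) := hq.prime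
    have : q ∣ p := hqz.dvd_of_dvd_pow hdq
    have := (Nat.prime_dvd_prime_iff_eq hq hp).mp this
    omega
  rcases (Nat.Prime.dvd_mul hp).mp ⟨q ^ 3, hAB⟩ with hdvd | hdvd
  · obtain ⟨A₁, hA₁⟩ := hdvd
    have hA₁B : A₁ * (m + t) = q ^ 3 := by
      rw [hA₁, mul_assoc] at hAB
      exact Nat.eq_of_mul_eq_mul_left hppos hAB
    obtain ⟨i, hi3, hA₁q⟩ := (Nat.dvd_prime_pow hq).mp ⟨(m + t), hA₁B.symm⟩
    have hBv : m + t = q ^ (3 - i) := by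
      have h0 : q ^ i * (m + t) = q ^ i * q ^ (3 - i) := by
        rw [← pow_add, show i + (3 - i) = 3 by omega, ← hA₁B, hA₁q]
      exact Nat.eq_of_mul_eq_mul_left (pow_pos hqpos i) h0
    have hEq : p * q ^ i + q ^ (3 - i) = p ^ 2 + q ^ 2 := by
      have h0 : p * q ^ i + q ^ (3 - i) = (m - t) + (m + t) := by
        rw [hA₁, hA₁q, hBv]
      linarith [hABsum, hm2]
    interval_cases i
    · norm_num at hEq; exact case_pq3 hEq
    · norm_num at hEq
      have hpp : p ^ 2 = p * p := by ring
      have h1 : p * q = p * p := by linarith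
      have := Nat.eq_of_mul_eq_mul_left hppos h1
      omega
    · norm_num at hEq
      have hEqZ : (p:ℤ) * q ^ 2 + q = p ^ 2 + q ^ 2 := by exact_mod_cast hEq
      exact qdvd_case ⟨(p:ℤ) * q + 1 - q, by linear_combination -hEqZ⟩
    · norm_num at hEq; exact case_size (by omega)
  · obtain ⟨B₁, hB₁⟩ := hdvd
    have hA₁B : (m - t) * B₁ = q ^ 3 := by
      rw [hB₁, show (m - t) * (p * B₁) = p * ((m - t) * B₁) by ring] at hAB
      exact Nat.eq_of_mul_eq_mul_left hppos hAB
    obtain ⟨i, hi3, hAq⟩ := (Nat.dvd_prime_pow hq).mp ⟨B₁, hA₁B.symm⟩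
    have hBv : B₁ = q ^ (3 - i) := by
      have h0 : q ^ i * B₁ = q ^ i * q ^ (3 - i) := by
        rw [← pow_add, show i + (3 - i) = 3 by omega, ← hA₁B, hAq]
      exact Nat.eq_of_mul_eq_mul_left (pow_pos hqpos i) h0
    have hEq : q ^ i + p * q ^ (3 - i) = p ^ 2 + q ^ 2 := by
      have h0 : q ^ i + p * q ^ (3 - i) = (m - t) + (m + t) := by
        rw [hAq, hB₁, hBv]
      linarith [hABsum, hm2]
    interval_cases i
    · norm_num at hEq; exact case_size (by omega)
    · norm_num at hEq
      have hEqZ : (q:ℤ) + p * q ^ 2 = p ^ 2 + q ^ 2 := by exact_mod_cast hEq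
      exact qdvd_case ⟨1 + (p:ℤ) * q - q, by linear_combination -hEqZ⟩
    · norm_num at hEq
      have hpp : p ^ 2 = p * p := by ring
      have h1 : p * q = p * p := by linarith
      have := Nat.eq_of_mul_eq_mul_left hppos h1
      omega
    · norm_num at hEq; exact case_pq3 (by omega)

section Dyn

variable {c α β : ℚ}

lemma alpha_fix (hsum : α + β = 1) (hprod : α * β = c) : fc c α = α := by
  show α ^ 2 + c = α
  linear_combination α * hsum - hprod

lemma beta_fix (hsum : α + β = 1) (hprod : α * β = c) : fc c β = β := by
  show β ^ 2 + c = β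
  linear_combination β * hsum - hprod

lemma fc_neg (c y : ℚ) : fc c (-y) = fc c y := by
  show (-y) ^ 2 + c = y ^ 2 + c
  ring

lemma escape (hsum : α + β = 1) (hprod : α * β = c) (hα0 : α < 0)
    (y : ℚ) (hy : β < |y|) : |y| < |fc c y| := by
  have hβ1 : 1 < β := by linarith
  have habs : 0 ≤ |y| := abs_nonneg y
  have hkey : |y| < y ^ 2 + c := by
    have h1 : (|y| - α) * (|y| - β) > 0 := by
      apply mul_pos <;> nlinarith
    have h2 : y ^ 2 = |y| ^ 2 := (sq_abs y).symm
    nlinarith [h1]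
  calc |y| < y ^ 2 + c := hkey
    _ ≤ |y ^ 2 + c| := le_abs_self _
    _ = |fc c y| := rfl

lemma periodic_ext (c : ℚ) (x : ℚ) (m n : ℕ) (hmn : m < n)
    (heq : (fc c)^[m] x = (fc c)^[n] x) :
    ∀ t, (fc c)^[m + t * (n - m)] x = (fc c)^[m] x := by
  intro t
  induction t with
  | zero => simp
  | succ t ih =>
    have h1 : m + (t + 1) * (n - m) = (n - m) + (m + t * (n - m)) := by ring
    rw [h1, Function.iterate_add_apply, ih, ← Function.iterate_add_apply,
      show n - m + m = n by omega, ← heq]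

lemma bounded_of_preper (hsum : α + β = 1) (hprod : α * β = c) (hα0 : α < 0)
    (x : ℚ) (hx : IsPreper c x) : ∀ k, |(fc c)^[k] x| ≤ β := by
  by_contra hcon
  push_neg at hcon
  obtain ⟨j, hj⟩ := hcon
  obtain ⟨m, n, hmn, heq⟩ := hx
  have hA : ∀ d, β < |(fc c)^[j + d] x| := by
    intro d
    induction d with
    | zero => simpa using hj
    | succ d ih =>
      have h1 : (fc c)^[j + (d+1)] x = fc c ((fc c)^[j + d] x) := by
        rw [show j + (d+1) = (j+d) + 1 by omega, Function.iterate_succ_apply']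
      rw [h1]
      exact lt_trans ih (escape hsum hprod hα0 _ ih)
  have hB : ∀ d e, d < e → |(fc c)^[j + d] x| < |(fc c)^[j + e] x| := by
    intro d e hde
    induction e with
    | zero => omega
    | succ e ih =>
      have h1 : (fc c)^[j + (e+1)] x = fc c ((fc c)^[j + e] x) := by
        rw [show j + (e+1) = (j+e) + 1 by omega, Function.iterate_succ_apply']
      rcases Nat.lt_or_ge d e with h | h
      · exact lt_trans (ih h) (by rw [h1]; exact escape hsum hprod hα0 _ (hA e))
      · have : d = e := by omega
        subst this
        rw [h1]; exact escape hsum hprod hα0 _ (hA d)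
  have hper := periodic_ext c x m n hmn heq
  have hge1 : 1 ≤ n - m := by omega
  have hidx1 : j < m + (j + 1) * (n - m) := by
    have := Nat.mul_le_mul_left (j + 1) hge1
    omega
  have hidx2 : m + (j + 1) * (n - m) < m + (j + 2) * (n - m) := by
    have h2 : (j + 1) * (n - m) < (j + 2) * (n - m) :=
      (Nat.mul_lt_mul_right (by omega : 0 < n - m)).mpr (by omega)
    omega
  obtain ⟨d1, hd1⟩ : ∃ d1, m + (j + 1) * (n - m) = j + d1 := ⟨m + (j+1)*(n-m) - j, by omega⟩
  obtain ⟨d2, hd2⟩ : ∃ d2, m + (j + 2) * (n - m) = j + d2 := ⟨m + (j+2)*(n-m) - j, by omega⟩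
  have hlt : |(fc c)^[j + d1] x| < |(fc c)^[j + d2] x| := hB d1 d2 (by omega)
  rw [← hd1, ← hd2, hper (j+1), hper (j+2)] at hlt
  exact lt_irrefl _ hlt

lemma eventually_const_of_fix (c z : ℚ) (hz : fc c z = z) :
    ∀ (y : ℚ) (k j : ℕ), (fc c)^[k] y = z → k ≤ j → (fc c)^[j] y = z := by
  intro y k j hk hkj
  obtain ⟨d, rfl⟩ : ∃ d, j = k + d := ⟨j - k, by omega⟩
  clear hkj
  induction d with
  | zero => simpa using hk
  | succ d ih =>
    rw [show k + (d+1) = (k+d) + 1 by omega, Function.iterate_succ_apply', ih, hz]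

lemma per_classify (hsum : α + β = 1) (hprod : α * β = c) (hα0 : α < 0)
    (hca : -1 < c + α)
    (x : ℚ) (hb : ∀ k, |(fc c)^[k] x| ≤ β) (hx : IsPer c x) : x = α ∨ x = β := by
  have hβ1 : 1 < β := by linarith
  obtain ⟨N, hN1, hNx⟩ := hx
  have hret : ∀ t : ℕ, (fc c)^[t * N] x = x := by
    intro t
    induction t with
    | zero => simp
    | succ t ih =>
      rw [show (t+1) * N = t * N + N by ring, Function.iterate_add_apply, hNx, ih]
  by_cases hbeta : ∃ k, (fc c)^[k] x = β ∨ (fc c)^[k] x = -β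
  · right
    obtain ⟨k, hk⟩ := hbeta
    have hβfix := beta_fix hsum hprod
    have hk1 : (fc c)^[k + 1] x = β := by
      rw [Function.iterate_succ_apply']
      rcases hk with h | h
      · rw [h]; exact hβfix
      · rw [h, fc_neg]; exact hβfix
    have hall := eventually_const_of_fix c β hβfix x (k+1) ((k+1) * N) hk1
      (by calc k+1 = (k+1)*1 := by ring
            _ ≤ (k+1)*N := Nat.mul_le_mul_left _ hN1)
    rw [hret (k+1)] at hall
    exact hall
  · push_neg at hbeta
    have hstrict : ∀ k, |(fc c)^[k] x| < β := by
      intro k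
      rcases lt_or_eq_of_le (hb k) with h | h
      · exact h
      · exfalso
        rcases abs_eq (by linarith : (0:ℚ) ≤ β) |>.mp h with h' | h'
        · exact (hbeta k).1 h'
        · exact (hbeta k).2 h'
    have hlow : ∀ k, c ≤ (fc c)^[k] x := by
      intro k
      rcases Nat.eq_zero_or_pos k with rfl | hk
      · have h0 : x = fc c ((fc c)^[N-1] x) := by
          conv_lhs => rw [← hNx, show N = (N-1) + 1 by omega, Function.iterate_succ_apply']
        rw [show ((fc c)^[0] x) = x from rfl, h0]
        have := sq_nonneg ((fc c)^[N-1] x)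
        show c ≤ ((fc c)^[N-1] x) ^ 2 + c
        linarith
      · rw [show k = (k-1) + 1 by omega, Function.iterate_succ_apply']
        have := sq_nonneg ((fc c)^[k-1] x)
        show c ≤ ((fc c)^[k-1] x) ^ 2 + c
        linarith
    by_cases halpha : ∃ k, (fc c)^[k] x = α
    · left
      obtain ⟨k, hk⟩ := halpha
      have hαfix := alpha_fix hsum hprod
      have hall := eventually_const_of_fix c α hαfix x k ((k+1) * N) hk
        (by calc k ≤ (k+1)*1 := by omega
              _ ≤ (k+1)*N := Nat.mul_le_mul_left _ hN1)
      rw [hret (k+1)] at hall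
      exact hall
    · exfalso
      push_neg at halpha
      have hdec : ∀ k, |(fc c)^[k+1] x - α| < |(fc c)^[k] x - α| := by
        intro k
        set y := (fc c)^[k] x with hy
        have h1 : (fc c)^[k+1] x = fc c y := by rw [Function.iterate_succ_apply']
        have h2 : fc c y - α = (y - α) * (y + α) := by
          show y ^ 2 + c - α = (y - α) * (y + α)
          linear_combination α * hsum - hprod
        have h3 : |y + α| < 1 := by
          rw [abs_lt]
          constructor
          · have := hlow k
            rw [← hy] at this
            linarith
          · have := hstrict k
            rw [← hy] at this
            have := (abs_lt.mp this).2
            linarith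
        have h4 : 0 < |y - α| := abs_pos.mpr (sub_ne_zero.mpr (by rw [hy]; exact halpha k))
        calc |(fc c)^[k+1] x - α| = |y - α| * |y + α| := by rw [h1, h2, abs_mul]
          _ < |y - α| * 1 := by exact mul_lt_mul_of_pos_left h3 h4
          _ = |y - α| := by ring
      have hchain : ∀ k, 1 ≤ k → |(fc c)^[k] x - α| < |x - α| := by
        intro k hk
        induction k with
        | zero => omega
        | succ k ih =>
          rcases Nat.eq_zero_or_pos k with rfl | hk0
          · simpa using hdec 0
          · exact lt_trans (hdec k) (ih hk0)
      have := hchain N hN1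
      rw [hNx] at this
      exact lt_irrefl _ this

lemma pre_beta (hsum : α + β = 1) (hprod : α * β = c) (y : ℚ)
    (h : fc c y = β) : y = β ∨ y = -β := by
  have h' : y ^ 2 + c = β := h
  have h0 : (y - β) * (y + β) = 0 := by linear_combination h' - β * hsum + hprod
  rcases mul_eq_zero.mp h0 with h1 | h1
  · left; linarith [sub_eq_zero.mp h1]
  · right; linarith [add_eq_zero_iff_eq_neg.mp h1]

lemma pre_alpha (hsum : α + β = 1) (hprod : α * β = c) (y : ℚ)
    (h : fc c y = α) : y = α ∨ y = -α := by
  have h' : y ^ 2 + c = α := h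
  have h0 : (y - α) * (y + α) = 0 := by linear_combination h' - α * hsum + hprod
  rcases mul_eq_zero.mp h0 with h1 | h1
  · left; linarith [sub_eq_zero.mp h1]
  · right; linarith [add_eq_zero_iff_eq_neg.mp h1]

lemma pre_negbeta (hsum : α + β = 1) (hprod : α * β = c) (hα0 : α < 0)
    (hα1 : -1 < α) (y : ℚ) (h : fc c y = -β) : False := by
  have h' : y ^ 2 + c = -β := h
  have hβeq : β = 1 - α := by linarith
  have hceq : c = α - α ^ 2 := by rw [hβeq] at hprod; linear_combination -hprod
  have hα2 : α ^ 2 < 1 := by nlinarith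
  have : y ^ 2 = α ^ 2 - 1 := by rw [hβeq] at h'; linarith [hceq]
  nlinarith [sq_nonneg y]

lemma pre_nega {a : ℚ} (ha : a ^ 2 = -α - c) (y : ℚ)
    (h : fc c y = -α) : y = a ∨ y = -a := by
  have h' : y ^ 2 + c = -α := h
  have h0 : (y - a) * (y + a) = 0 := by linear_combination h' - ha
  rcases mul_eq_zero.mp h0 with h1 | h1
  · left; linarith [sub_eq_zero.mp h1]
  · right; linarith [add_eq_zero_iff_eq_neg.mp h1]

end Dyn

set_option maxHeartbeats 4000000 in
lemma key (p q : ℕ) (hp : p.Prime) (hq : q.Prime) (hpo : Odd p) (hqo : Odd q)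
    (hne : p ≠ q) (hc1 : 3 * q < 4 * p) (hc2 : 4 * p < 5 * q) :
    letI P : ℚ := (p : ℚ)
    letI Q : ℚ := (q : ℚ)
    letI c : ℚ := -((P ^ 4 - 2 * P ^ 3 * Q + 2 * P ^ 2 * Q ^ 2 - 2 * P * Q ^ 3 + Q ^ 4) /
      (2 * P * Q) ^ 2)
    {x : ℚ | IsPreper c x} =
      {1 / 2 + (P ^ 2 - P * Q + Q ^ 2) / (2 * P * Q),
        1 / 2 - (P ^ 2 - P * Q + Q ^ 2) / (2 * P * Q),
        -(1 / 2) + (P ^ 2 - P * Q + Q ^ 2) / (2 * P * Q),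
        -(1 / 2) - (P ^ 2 - P * Q + Q ^ 2) / (2 * P * Q),
        (P ^ 2 - Q ^ 2) / (2 * P * Q), -((P ^ 2 - Q ^ 2) / (2 * P * Q))} ∧
    {x : ℚ | IsPreper c x}.ncard = 6 ∧
    {x : ℚ | IsPer c x}.ncard = 2 ∧
    (∀ x : ℚ, IsPer c x → fc c x = x) := by
  set P : ℚ := (p : ℚ) with hPdef
  set Q : ℚ := (q : ℚ) with hQdef
  set c : ℚ := -((P ^ 4 - 2 * P ^ 3 * Q + 2 * P ^ 2 * Q ^ 2 - 2 * P * Q ^ 3 + Q ^ 4) /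
      (2 * P * Q) ^ 2) with hcdef
  set r : ℚ := (P ^ 2 - P * Q + Q ^ 2) / (2 * P * Q) with hr
  set β : ℚ := 1 / 2 + r with hβ
  set α : ℚ := 1 / 2 - r with hα
  set a : ℚ := (P ^ 2 - Q ^ 2) / (2 * P * Q) with hadef
  -- basic numeric facts
  have hp3 : 3 ≤ p := by
    have h2 := hp.two_le
    have := Nat.odd_iff.mp hpo
    omega
  have hq3 : 3 ≤ q := by
    have h2 := hq.two_le
    have := Nat.odd_iff.mp hqo
    omega
  have hP3 : (3 : ℚ) ≤ P := by rw [hPdef]; exact_mod_cast hp3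
  have hQ3 : (3 : ℚ) ≤ Q := by rw [hQdef]; exact_mod_cast hq3
  have hP0 : (0 : ℚ) < P := by linarith
  have hQ0 : (0 : ℚ) < Q := by linarith
  have hPne : P ≠ 0 := ne_of_gt hP0
  have hQne : Q ≠ 0 := ne_of_gt hQ0
  have hPQne : P ≠ Q := by
    rw [hPdef, hQdef]
    intro h
    exact hne (by exact_mod_cast h)
  have hcq1 : 3 * Q < 4 * P := by rw [hPdef, hQdef]; exact_mod_cast hc1
  have hcq2 : 4 * P < 5 * Q := by rw [hPdef, hQdef]; exact_mod_cast hc2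
  -- identities
  have hsum : α + β = 1 := by rw [hα, hβ]; ring
  have hprod : α * β = c := by
    rw [hα, hβ, hr, hcdef]; field_simp; ring
  have hαv : α = -((P - Q) ^ 2) / (2 * P * Q) := by
    rw [hα, hr]; field_simp; ring
  have hα0 : α < 0 := by
    rw [hαv]
    apply div_neg_of_neg_of_pos
    · have : 0 < (P - Q) ^ 2 := pow_two_pos_of_ne_zero (sub_ne_zero.mpr hPQne)
      linarith
    · positivity
  have hβ1 : 1 < β := by linarith
  have ha2 : a ^ 2 < 1 := by
    rw [hadef, div_pow, div_lt_one (by positivity)]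
    nlinarith [mul_lt_mul_of_pos_left hcq2 hP0, mul_lt_mul_of_pos_left hcq2 hQ0,
      mul_lt_mul_of_pos_left hcq1 hP0, mul_lt_mul_of_pos_left hcq1 hQ0,
      mul_pos hP0 hQ0, sq_nonneg (P - Q), sq_nonneg (P + Q)]
  have hceq : c + α = -(a ^ 2) := by
    rw [hα, hr, hcdef, hadef]; field_simp; ring
  have hca : -1 < c + α := by rw [hceq]; linarith
  have ha : a ^ 2 = -α - c := by linarith
  have ha0 : a ≠ 0 := by
    rw [hadef]
    apply div_ne_zero _ (by positivity)
    intro h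
    have h2 : (P - Q) * (P + Q) = 0 := by linear_combination h
    rcases mul_eq_zero.mp h2 with h3 | h3
    · exact hPQne (by linarith)
    · linarith
  have hsqlt : (P - Q) ^ 2 < 2 * P * Q := by
    nlinarith [mul_pos (by linarith : (0:ℚ) < 4 * P - 3 * Q)
      (by linarith : (0:ℚ) < 5 * Q - 4 * P), mul_pos hP0 hQ0]
  have hα1 : (-1 : ℚ) < α := by
    have h1 : (P - Q) ^ 2 / (2 * P * Q) < 1 :=
      (div_lt_one (by positivity)).mpr (by linarith)
    rw [hαv, neg_div]
    linarith
  have hamabs : |a| < 1 := by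
    have h1 : |a| ^ 2 < 1 := by rw [sq_abs]; exact ha2
    nlinarith [abs_nonneg a]
  have ham1 : -1 < a := (abs_lt.mp hamabs).1
  have ham2 : a < 1 := (abs_lt.mp hamabs).2
  -- no rational preimage of a
  have hnota : ∀ y : ℚ, fc c y ≠ a := by
    intro y hy
    have hy' : y ^ 2 + c - a = 0 := by
      have h1 : y ^ 2 + c = a := hy
      linarith
    have hid : (y * (2 * P * Q)) ^ 2 =
        ((P ^ 2 + Q ^ 2) ^ 2 - 4 * P * Q ^ 3) + (2 * P * Q) ^ 2 * (y ^ 2 + c - a) := by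
      rw [hcdef, hadef]; field_simp; ring
    have hw : (y * (2 * P * Q)) ^ 2 = (P ^ 2 + Q ^ 2) ^ 2 - 4 * P * Q ^ 3 := by
      rw [hid, hy']; ring
    rcases lt_or_gt_of_ne hne with hpq | hpq
    · -- p < q : RHS negative
      have hPQ : P < Q := by rw [hPdef, hQdef]; exact_mod_cast hpq
      have he : (0 : ℚ) < Q - P := by linarith
      have he2 : Q - P < P := by linarith
      have hfac : 4 * P * Q ^ 3 - (P ^ 2 + Q ^ 2) ^ 2 =
          (Q - P) * (4 * P ^ 3 + 4 * (Q - P) * P ^ 2 - (Q - P) ^ 3) := by ring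
      have hsq : (Q - P) ^ 2 < P ^ 2 := by nlinarith
      have h3 : (Q - P) ^ 3 < 4 * P ^ 3 + 4 * (Q - P) * P ^ 2 := by nlinarith
      have hpos : 0 < 4 * P * Q ^ 3 - (P ^ 2 + Q ^ 2) ^ 2 := by
        rw [hfac]
        exact mul_pos he (by linarith)
      nlinarith [sq_nonneg (y * (2 * P * Q))]
    · -- q < p : nonsquare
      set w : ℚ := y * (2 * P * Q) with hwdef
      have hwQ : w ^ 2 = ((((p : ℤ) ^ 2 + (q : ℤ) ^ 2) ^ 2 - 4 * p * q ^ 3 : ℤ) : ℚ) := by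
        rw [hw, hPdef, hQdef]; push_cast; ring
      have hd1 : w.den = 1 := by
        have h1 : (w * w).den = 1 := by
          have h2 : w * w = ((((p : ℤ) ^ 2 + (q : ℤ) ^ 2) ^ 2 - 4 * p * q ^ 3 : ℤ) : ℚ) := by
            rw [← hwQ]; ring
          rw [h2, Rat.den_intCast]
        rw [Rat.mul_self_den] at h1
        exact Nat.eq_one_of_mul_eq_one_right ((mul_comm w.den w.den) ▸ h1)
      have hwnum : (w.num : ℚ) = w := (Rat.den_eq_one_iff w).mp hd1
      have hnumZ : w.num ^ 2 = (((p : ℤ) ^ 2 + (q : ℤ) ^ 2) ^ 2 - 4 * p * q ^ 3 : ℤ) := by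
        have h4 : ((w.num : ℚ)) ^ 2
            = ((((p : ℤ) ^ 2 + (q : ℤ) ^ 2) ^ 2 - 4 * p * q ^ 3 : ℤ) : ℚ) := by
          rw [hwnum, hwQ]
        exact_mod_cast h4
      have htint : ((w.num.natAbs : ℕ) : ℤ) ^ 2 + 4 * p * q ^ 3
          = ((p : ℤ) ^ 2 + (q : ℤ) ^ 2) ^ 2 := by
        have h5 : ((w.num.natAbs : ℕ) : ℤ) ^ 2 = w.num ^ 2 := by
          rw [show ((w.num.natAbs : ℕ) : ℤ) = |w.num| from (Int.abs_eq_natAbs w.num).symm,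
            sq_abs]
        rw [h5, hnumZ]; ring
      obtain ⟨k, hk⟩ := hpo
      obtain ⟨l, hl⟩ := hqo
      have hm2 : p ^ 2 + q ^ 2 = 2 * (2 * k ^ 2 + 2 * k + 2 * l ^ 2 + 2 * l + 1) := by
        rw [hk, hl]; ring
      set m : ℕ := 2 * k ^ 2 + 2 * k + 2 * l ^ 2 + 2 * l + 1 with hmdef
      have hm2Z : ((p : ℤ) ^ 2 + (q : ℤ) ^ 2) = 2 * (m : ℤ) := by exact_mod_cast hm2
      set t : ℕ := w.num.natAbs with htdef
      have ht4 : (t : ℤ) ^ 2 = 4 * ((m : ℤ) ^ 2 - (p : ℤ) * q ^ 3) := by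
        linear_combination htint + (((p:ℤ)^2 + (q:ℤ)^2) + 2 * (m:ℤ)) * hm2Z
      have h2dvd : (2 : ℤ) ∣ (t : ℤ) := by
        apply Int.prime_two.dvd_of_dvd_pow (n := 2)
        exact ⟨2 * ((m : ℤ) ^ 2 - (p : ℤ) * q ^ 3), by rw [ht4]; ring⟩
      have h2t : 2 ∣ t := by exact_mod_cast h2dvd
      obtain ⟨t₀, ht₀⟩ := h2t
      have htn : t ^ 2 + 4 * (p * q ^ 3) = (p ^ 2 + q ^ 2) ^ 2 := by
        have h6 : (t : ℤ) ^ 2 + 4 * ((p : ℤ) * (q : ℤ) ^ 3) = ((p : ℤ) ^ 2 + (q : ℤ) ^ 2) ^ 2 := by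
          linear_combination htint
        exact_mod_cast h6
      have hsq2 : (p ^ 2 + q ^ 2) ^ 2 = 4 * m ^ 2 := by rw [hm2]; ring
      have ht0sq : t ^ 2 = 4 * t₀ ^ 2 := by rw [ht₀]; ring
      have h44 : 4 * (t₀ ^ 2 + p * q ^ 3) = 4 * m ^ 2 := by
        have e : 4 * (t₀ ^ 2 + p * q ^ 3) = 4 * t₀ ^ 2 + 4 * (p * q ^ 3) := by ring
        linarith
      have hfin : t₀ ^ 2 + p * q ^ 3 = m ^ 2 :=
        Nat.eq_of_mul_eq_mul_left (by norm_num) h44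
      exact nonsq p q t₀ m hp hq hq3 hpq (by omega) hm2 hfin
  -- no rational preimage of -a
  have hnotna : ∀ y : ℚ, fc c y ≠ -a := by
    intro y hy
    have hy' : y ^ 2 + c + a = 0 := by
      have h1 : y ^ 2 + c = -a := hy
      linarith
    have hid : (y * (2 * P * Q)) ^ 2 =
        ((P ^ 2 + Q ^ 2) ^ 2 - 4 * P ^ 3 * Q) + (2 * P * Q) ^ 2 * (y ^ 2 + c + a) := by
      rw [hcdef, hadef]; field_simp; ring
    have hw : (y * (2 * P * Q)) ^ 2 = (P ^ 2 + Q ^ 2) ^ 2 - 4 * P ^ 3 * Q := by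
      rw [hid, hy']; ring
    rcases lt_or_gt_of_ne hne with hpq | hpq
    · -- p < q : nonsquare with roles of p and q swapped
      set w : ℚ := y * (2 * P * Q) with hwdef
      have hwQ : w ^ 2 = ((((q : ℤ) ^ 2 + (p : ℤ) ^ 2) ^ 2 - 4 * q * p ^ 3 : ℤ) : ℚ) := by
        rw [hw, hPdef, hQdef]; push_cast; ring
      have hd1 : w.den = 1 := by
        have h1 : (w * w).den = 1 := by
          have h2 : w * w = ((((q : ℤ) ^ 2 + (p : ℤ) ^ 2) ^ 2 - 4 * q * p ^ 3 : ℤ) : ℚ) := by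
            rw [← hwQ]; ring
          rw [h2, Rat.den_intCast]
        rw [Rat.mul_self_den] at h1
        exact Nat.eq_one_of_mul_eq_one_right ((mul_comm w.den w.den) ▸ h1)
      have hwnum : (w.num : ℚ) = w := (Rat.den_eq_one_iff w).mp hd1
      have hnumZ : w.num ^ 2 = (((q : ℤ) ^ 2 + (p : ℤ) ^ 2) ^ 2 - 4 * q * p ^ 3 : ℤ) := by
        have h4 : ((w.num : ℚ)) ^ 2
            = ((((q : ℤ) ^ 2 + (p : ℤ) ^ 2) ^ 2 - 4 * q * p ^ 3 : ℤ) : ℚ) := by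
          rw [hwnum, hwQ]
        exact_mod_cast h4
      have htint : ((w.num.natAbs : ℕ) : ℤ) ^ 2 + 4 * q * p ^ 3
          = ((q : ℤ) ^ 2 + (p : ℤ) ^ 2) ^ 2 := by
        have h5 : ((w.num.natAbs : ℕ) : ℤ) ^ 2 = w.num ^ 2 := by
          rw [show ((w.num.natAbs : ℕ) : ℤ) = |w.num| from (Int.abs_eq_natAbs w.num).symm,
            sq_abs]
        rw [h5, hnumZ]; ring
      obtain ⟨k, hk⟩ := hpo
      obtain ⟨l, hl⟩ := hqo
      have hm2 : q ^ 2 + p ^ 2 = 2 * (2 * k ^ 2 + 2 * k + 2 * l ^ 2 + 2 * l + 1) := by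
        rw [hk, hl]; ring
      set m : ℕ := 2 * k ^ 2 + 2 * k + 2 * l ^ 2 + 2 * l + 1 with hmdef
      have hm2Z : ((q : ℤ) ^ 2 + (p : ℤ) ^ 2) = 2 * (m : ℤ) := by exact_mod_cast hm2
      set t : ℕ := w.num.natAbs with htdef
      have ht4 : (t : ℤ) ^ 2 = 4 * ((m : ℤ) ^ 2 - (q : ℤ) * p ^ 3) := by
        linear_combination htint + (((q:ℤ)^2 + (p:ℤ)^2) + 2 * (m:ℤ)) * hm2Z
      have h2dvd : (2 : ℤ) ∣ (t : ℤ) := by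
        apply Int.prime_two.dvd_of_dvd_pow (n := 2)
        exact ⟨2 * ((m : ℤ) ^ 2 - (q : ℤ) * p ^ 3), by rw [ht4]; ring⟩
      have h2t : 2 ∣ t := by exact_mod_cast h2dvd
      obtain ⟨t₀, ht₀⟩ := h2t
      have htn : t ^ 2 + 4 * (q * p ^ 3) = (q ^ 2 + p ^ 2) ^ 2 := by
        have h6 : (t : ℤ) ^ 2 + 4 * ((q : ℤ) * (p : ℤ) ^ 3) = ((q : ℤ) ^ 2 + (p : ℤ) ^ 2) ^ 2 := by
          linear_combination htint
        exact_mod_cast h6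
      have hsq2 : (q ^ 2 + p ^ 2) ^ 2 = 4 * m ^ 2 := by rw [hm2]; ring
      have ht0sq : t ^ 2 = 4 * t₀ ^ 2 := by rw [ht₀]; ring
      have h44 : 4 * (t₀ ^ 2 + q * p ^ 3) = 4 * m ^ 2 := by
        have e : 4 * (t₀ ^ 2 + q * p ^ 3) = 4 * t₀ ^ 2 + 4 * (q * p ^ 3) := by ring
        linarith
      have hfin : t₀ ^ 2 + q * p ^ 3 = m ^ 2 :=
        Nat.eq_of_mul_eq_mul_left (by norm_num) h44
      exact nonsq q p t₀ m hq hp hp3 hpq (by omega) hm2 hfin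
    · -- q < p : RHS negative
      have hPQ : Q < P := by rw [hPdef, hQdef]; exact_mod_cast hpq
      have he : (0 : ℚ) < P - Q := by linarith
      have he2 : P - Q < Q := by linarith
      have hfac : 4 * P ^ 3 * Q - (P ^ 2 + Q ^ 2) ^ 2 =
          (P - Q) * (4 * Q ^ 3 + 4 * (P - Q) * Q ^ 2 - (P - Q) ^ 3) := by ring
      have hsq : (P - Q) ^ 2 < Q ^ 2 := by nlinarith
      have h3 : (P - Q) ^ 3 < 4 * Q ^ 3 + 4 * (P - Q) * Q ^ 2 := by nlinarith
      have hpos : 0 < 4 * P ^ 3 * Q - (P ^ 2 + Q ^ 2) ^ 2 := by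
        rw [hfac]
        exact mul_pos he (by linarith)
      nlinarith [sq_nonneg (y * (2 * P * Q))]
  -- fixed-point identities
  have hfixα : fc c α = α := alpha_fix hsum hprod
  have hfixβ : fc c β = β := beta_fix hsum hprod
  have hnegβ : fc c (-β) = β := by rw [fc_neg]; exact hfixβ
  have hnegα : fc c (-α) = α := by rw [fc_neg]; exact hfixα
  have hfixa : fc c a = -α := by show a ^ 2 + c = -α; linarith [ha]
  have hfixna : fc c (-a) = -α := by rw [fc_neg]; exact hfixa
  -- pullback
  have hpull : ∀ (j : ℕ) (y : ℚ), ((fc c)^[j] y = α ∨ (fc c)^[j] y = β) →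
      y ∈ ({β, α, -α, -β, a, -a} : Set ℚ) := by
    intro j
    induction j with
    | zero =>
      intro y hy
      simp only [Function.iterate_zero_apply] at hy
      rcases hy with rfl | rfl
      · simp
      · simp
    | succ j ih =>
      intro y hy
      rw [Function.iterate_succ_apply] at hy
      have hfy := ih (fc c y) hy
      simp only [Set.mem_insert_iff, Set.mem_singleton_iff] at hfy
      rcases hfy with h | h | h | h | h | h
      · rcases pre_beta hsum hprod y h with rfl | rfl <;> simp
      · rcases pre_alpha hsum hprod y h with rfl | rfl <;> simp
      · rcases pre_nega ha y h with rfl | rfl <;> simp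
      · exact (pre_negbeta hsum hprod hα0 hα1 y h).elim
      · exact (hnota y h).elim
      · exact (hnotna y h).elim
  -- the set of preperiodic points
  have hPreEq : {x : ℚ | IsPreper c x} = ({β, α, -α, -β, a, -a} : Set ℚ) := by
    apply Set.eq_of_subset_of_subset
    · intro x hx
      simp only [Set.mem_setOf_eq] at hx
      have hb := bounded_of_preper hsum hprod hα0 x hx
      obtain ⟨m', n', hmn, heq⟩ := hx
      have hzper : IsPer c ((fc c)^[m'] x) :=
        ⟨n' - m', by omega, by
          rw [← Function.iterate_add_apply, show n' - m' + m' = n' by omega]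
          exact heq.symm⟩
      have hbz : ∀ k, |(fc c)^[k] ((fc c)^[m'] x)| ≤ β := fun k => by
        rw [← Function.iterate_add_apply]; exact hb (k + m')
      have hz := per_classify hsum hprod hα0 hca _ hbz hzper
      exact hpull m' x hz
    · intro x hx
      simp only [Set.mem_insert_iff, Set.mem_singleton_iff] at hx
      simp only [Set.mem_setOf_eq]
      rcases hx with rfl | rfl | rfl | rfl | rfl | rfl
      · exact ⟨0, 1, by omega, by simpa using hfixβ.symm⟩
      · exact ⟨0, 1, by omega, by simpa using hfixα.symm⟩
      · refine ⟨1, 2, by omega, ?_⟩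
        have e1 : (fc c)^[1] (-α) = α := by simpa using hnegα
        have e2 : (fc c)^[2] (-α) = α := by
          rw [show (2:ℕ) = 1 + 1 from rfl, Function.iterate_succ_apply', e1]; exact hfixα
        rw [e1, e2]
      · refine ⟨1, 2, by omega, ?_⟩
        have e1 : (fc c)^[1] (-β) = β := by simpa using hnegβ
        have e2 : (fc c)^[2] (-β) = β := by
          rw [show (2:ℕ) = 1 + 1 from rfl, Function.iterate_succ_apply', e1]; exact hfixβ
        rw [e1, e2]
      · refine ⟨2, 3, by omega, ?_⟩
        have e1 : (fc c)^[1] a = -α := by simpa using hfixa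
        have e2 : (fc c)^[2] a = α := by
          rw [show (2:ℕ) = 1 + 1 from rfl, Function.iterate_succ_apply', e1]; exact hnegα
        have e3 : (fc c)^[3] a = α := by
          rw [show (3:ℕ) = 2 + 1 from rfl, Function.iterate_succ_apply', e2]; exact hfixα
        rw [e2, e3]
      · refine ⟨2, 3, by omega, ?_⟩
        have e1 : (fc c)^[1] (-a) = -α := by simpa using hfixna
        have e2 : (fc c)^[2] (-a) = α := by
          rw [show (2:ℕ) = 1 + 1 from rfl, Function.iterate_succ_apply', e1]; exact hnegα
        have e3 : (fc c)^[3] (-a) = α := by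
          rw [show (3:ℕ) = 2 + 1 from rfl, Function.iterate_succ_apply', e2]; exact hfixα
        rw [e2, e3]
  -- the set of periodic points
  have hPerEq : {x : ℚ | IsPer c x} = ({α, β} : Set ℚ) := by
    ext x
    simp only [Set.mem_setOf_eq, Set.mem_insert_iff, Set.mem_singleton_iff]
    constructor
    · intro hx
      have hpre : IsPreper c x := by
        obtain ⟨N, hN1, hNx⟩ := hx
        exact ⟨0, N, by omega, by simpa using hNx.symm⟩
      exact per_classify hsum hprod hα0 hca x (bounded_of_preper hsum hprod hα0 x hpre) hx
    · rintro (rfl | rfl)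
      · exact ⟨1, le_refl 1, by simpa using hfixα⟩
      · exact ⟨1, le_refl 1, by simpa using hfixβ⟩
  -- distinctness
  have hd1 : α - a = (Q - P) / Q := by rw [hαv, hadef]; field_simp; ring
  have hd2 : α + a = (P - Q) / P := by rw [hαv, hadef]; field_simp; ring
  have hQP0 : Q - P ≠ 0 := sub_ne_zero.mpr (Ne.symm hPQne)
  have hPQ0 : P - Q ≠ 0 := sub_ne_zero.mpr hPQne
  have hαa : α ≠ a := by
    intro h
    have h1 : (Q - P) / Q = 0 := by rw [← hd1, h]; ring
    exact hQP0 ((div_eq_zero_iff.mp h1).resolve_right hQne)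
  have hαna : α ≠ -a := by
    intro h
    have h1 : (P - Q) / P = 0 := by rw [← hd2, h]; ring
    exact hPQ0 ((div_eq_zero_iff.mp h1).resolve_right hPne)
  have hn6 : ({β, α, -α, -β, a, -a} : Set ℚ).ncard = 6 := by
    have h56 : ({a, -a} : Set ℚ).ncard = 2 :=
      Set.ncard_pair (by intro h; apply ha0; linarith)
    have h46 : ({-β, a, -a} : Set ℚ).ncard = 3 := by
      rw [Set.ncard_insert_of_notMem, h56]
      simp only [Set.mem_insert_iff, Set.mem_singleton_iff]
      push_neg
      exact ⟨by intro h; linarith, by intro h; linarith⟩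
    have h36 : ({-α, -β, a, -a} : Set ℚ).ncard = 4 := by
      rw [Set.ncard_insert_of_notMem, h46]
      simp only [Set.mem_insert_iff, Set.mem_singleton_iff]
      push_neg
      refine ⟨by intro h; linarith, ?_, ?_⟩
      · intro h; exact hαna (by linarith)
      · intro h; exact hαa (by linarith)
    have h26 : ({α, -α, -β, a, -a} : Set ℚ).ncard = 5 := by
      rw [Set.ncard_insert_of_notMem, h36]
      simp only [Set.mem_insert_iff, Set.mem_singleton_iff]
      push_neg
      exact ⟨by intro h; linarith, by intro h; linarith, hαa, hαna⟩
    rw [Set.ncard_insert_of_notMem, h26]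
    simp only [Set.mem_insert_iff, Set.mem_singleton_iff]
    push_neg
    exact ⟨by intro h; linarith, by intro h; linarith, by intro h; linarith,
      by intro h; linarith, by intro h; linarith⟩
  -- conversions for the displayed set
  have e3' : (-(1 / 2) + r : ℚ) = -α := by rw [hα]; ring
  have e4' : (-(1 / 2) - r : ℚ) = -β := by rw [hβ]; ring
  refine ⟨?_, ?_, ?_, ?_⟩
  · rw [e3', e4']
    exact hPreEq
  · rw [hPreEq]
    exact hn6
  · rw [hPerEq]
    exact Set.ncard_pair (by intro h; linarith)
  · intro x hx
    have hx' : x ∈ ({α, β} : Set ℚ) := by rw [← hPerEq]; exact hx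
    simp only [Set.mem_insert_iff, Set.mem_singleton_iff] at hx'
    rcases hx' with rfl | rfl
    · exact hfixα
    · exact hfixβ

/-- For sequences of distinct odd primes `p n ≠ q n` with `p n / q n → 1`, and
`c n = -(p⁴ - 2p³q + 2p²q² - 2pq³ + q⁴)/(2pq)²`, for all large `n` the map `f_{c n}`
has exactly the six rational preperiodic points `±1/2 ± (p² - pq + q²)/(2pq)` and
`±(p² - q²)/(2pq)`, of which exactly 2 are periodic, both fixed. -/
theorem graph_6_1_1_family (p q : ℕ → ℕ)
    (hp : ∀ n, (p n).Prime) (hq : ∀ n, (q n).Prime)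
    (hpodd : ∀ n, Odd (p n)) (hqodd : ∀ n, Odd (q n))
    (hne : ∀ n, p n ≠ q n)
    (hlim : Tendsto (fun n => (p n : ℝ) / (q n : ℝ)) atTop (nhds 1)) :
    ∀ᶠ n in atTop,
      letI P : ℚ := (p n : ℚ)
      letI Q : ℚ := (q n : ℚ)
      letI c : ℚ := -((P ^ 4 - 2 * P ^ 3 * Q + 2 * P ^ 2 * Q ^ 2 - 2 * P * Q ^ 3 + Q ^ 4) /
        (2 * P * Q) ^ 2)
      {x : ℚ | IsPreper c x} =
        {1 / 2 + (P ^ 2 - P * Q + Q ^ 2) / (2 * P * Q),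
          1 / 2 - (P ^ 2 - P * Q + Q ^ 2) / (2 * P * Q),
          -(1 / 2) + (P ^ 2 - P * Q + Q ^ 2) / (2 * P * Q),
          -(1 / 2) - (P ^ 2 - P * Q + Q ^ 2) / (2 * P * Q),
          (P ^ 2 - Q ^ 2) / (2 * P * Q), -((P ^ 2 - Q ^ 2) / (2 * P * Q))} ∧
      {x : ℚ | IsPreper c x}.ncard = 6 ∧
      {x : ℚ | IsPer c x}.ncard = 2 ∧
      (∀ x : ℚ, IsPer c x → fc c x = x) := by
  have h14 : ∀ᶠ n in atTop, dist ((p n : ℝ) / (q n : ℝ)) 1 < 1/4 :=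
    Metric.tendsto_nhds.mp hlim (1/4) (by norm_num)
  filter_upwards [h14] with n hn
  rw [Real.dist_eq, abs_sub_lt_iff] at hn
  obtain ⟨hn1, hn2⟩ := hn
  have hq0 : (0 : ℝ) < q n := by exact_mod_cast (hq n).pos
  have hc2 : 4 * p n < 5 * q n := by
    have h1 : (p n : ℝ) / (q n : ℝ) < 5/4 := by linarith
    have h2 : (p n : ℝ) < 5/4 * (q n : ℝ) := (div_lt_iff₀ hq0).mp h1
    have h3 : (4 : ℝ) * (p n) < 5 * (q n) := by linarith
    exact_mod_cast h3
  have hc1 : 3 * q n < 4 * p n := by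
    have h1 : (3 : ℝ)/4 < (p n : ℝ) / (q n : ℝ) := by linarith
    have h2 : (3 : ℝ)/4 * (q n : ℝ) < p n := (lt_div_iff₀ hq0).mp h1
    have h3 : (3 : ℝ) * (q n) < 4 * (p n) := by linarith
    exact_mod_cast h3
  exact key (p n) (q n) (hp n) (hq n) (hpodd n) (hqodd n) (hne n) hc1 hc2
end

section
/- Let K be an algebraically closed field that is complete with respect to a nontrivial nonarchimedean multiplicative norm. Let f ∈ K[X] be a monic polynomial of degree d ≥ 2, with filled Julia set 𝒦_f = {x ∈ K : the orbit (f^[n](x))_{n≥0} is bounded in norm}. Suppose r > 0 is the radius of a minimal closed ball containing 𝒦_f, i.e., 𝒦_f ⊆ B̄(z₀, r) for some z₀ ∈ K and every closed ball containing 𝒦_f has radius ≥ r. Then for any point x₀ ∈ 𝒦_f, the filled Julia set is contained in the union of the closed balls of radius 1 centered at the roots of f(X) − x₀: 𝒦_f ⊆ ⋃_{x : f(x) = x₀} B̄(x, 1). -/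
open Polynomial

/-- The orbit of `x` under evaluation of the polynomial `f` is bounded in norm. -/
def BoundedOrbit {K : Type*} [NormedField K] (f : K[X]) (x : K) : Prop :=
  ∃ C : ℝ, ∀ n : ℕ, ‖(fun y => f.eval y)^[n] x‖ ≤ C

lemma boundedOrbit_apply {K : Type*} [NormedField K] {f : K[X]} {x : K}
    (h : BoundedOrbit f x) : BoundedOrbit f (f.eval x) := by
  obtain ⟨C, hC⟩ := h
  refine ⟨C, fun n => ?_⟩
  have := hC (n + 1)
  rwa [Function.iterate_succ_apply] at this

lemma boundedOrbit_of_eval {K : Type*} [NormedField K] {f : K[X]} {b x₀ : K}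
    (hb : f.eval b = x₀) (h : BoundedOrbit f x₀) : BoundedOrbit f b := by
  obtain ⟨C, hC⟩ := h
  refine ⟨max C ‖b‖, fun n => ?_⟩
  cases n with
  | zero => simp
  | succ n =>
    rw [Function.iterate_succ_apply]
    simp only [hb]
    exact le_max_of_le_left (hC n)

lemma norm_multiset_prod' {K : Type*} [NormedField K] (s : Multiset K) :
    ‖s.prod‖ = (s.map fun a => ‖a‖).prod := by
  induction s using Multiset.induction with
  | empty => simp
  | cons a s ih => simp [norm_mul, ih]

/-- Benedetto's lemma, first containment: over an algebraically closed, complete,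
nonarchimedean nontrivially normed field, if `r` is the radius of a minimal closed ball
containing the filled Julia set of a monic polynomial `f` of degree `d ≥ 2`, then for any
`x₀` in the filled Julia set, the filled Julia set is contained in the union of the closed
balls of radius 1 about the roots of `f(X) - x₀`. -/
theorem filledJulia_subset_unit_balls
    {K : Type*} [NontriviallyNormedField K] [IsAlgClosed K] [CompleteSpace K]
    [IsUltrametricDist K]
    (f : K[X]) (d : ℕ) (hd : 2 ≤ d) (hmonic : f.Monic) (hdeg : f.natDegree = d)
    (r : ℝ) (hr : 0 < r)
    (z₀ : K) (hcover : {x : K | BoundedOrbit f x} ⊆ Metric.closedBall z₀ r)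
    (hmin : ∀ (z : K) (s : ℝ), {x : K | BoundedOrbit f x} ⊆ Metric.closedBall z s → r ≤ s)
    (x₀ : K) (hx₀ : BoundedOrbit f x₀) :
    {x : K | BoundedOrbit f x} ⊆ ⋃ x ∈ {x : K | f.eval x = x₀}, Metric.closedBall x 1 := by
  -- diameter bound inside the covering ball
  have hdiam : ∀ a b : K, BoundedOrbit f a → BoundedOrbit f b → ‖a - b‖ ≤ r := by
    intro a b ha hb
    have h1 : dist a z₀ ≤ r := hcover ha
    have h2 : dist z₀ b ≤ r := by rw [dist_comm]; exact hcover hb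
    calc ‖a - b‖ = dist a b := (dist_eq_norm a b).symm
      _ ≤ max (dist a z₀) (dist z₀ b) := IsUltrametricDist.dist_triangle_max a z₀ b
      _ ≤ r := max_le h1 h2
  -- the shifted polynomial and its roots
  set p : K[X] := f - C x₀ with hp
  have hdegC : (C x₀).degree < f.degree := by
    apply lt_of_le_of_lt (degree_C_le)
    rw [degree_eq_natDegree hmonic.ne_zero, hdeg]
    exact_mod_cast Nat.lt_of_lt_of_le (by norm_num) hd
  have hpm : p.Monic := hmonic.sub_of_left hdegC
  have hpne : p ≠ 0 := hpm.ne_zero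
  have hpdeg : p.natDegree = d := by rw [hp, natDegree_sub_C, hdeg]
  have hsplit : Splits p := IsAlgClosed.splits p
  have hcard : p.roots.card = d := by
    rw [(splits_iff_card_roots).mp hsplit, hpdeg]
  have hroot : ∀ b ∈ p.roots, f.eval b = x₀ := by
    intro b hb
    have := (mem_roots'.mp hb).2
    rw [IsRoot, hp, eval_sub, eval_C, sub_eq_zero] at this
    exact this
  have hrootK : ∀ b ∈ p.roots, BoundedOrbit f b := fun b hb =>
    boundedOrbit_of_eval (hroot b hb) hx₀
  -- evaluation formula
  have heval : ∀ y : K, ‖f.eval y - x₀‖ = (p.roots.map fun a => ‖y - a‖).prod := by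
    intro y
    have hfac := hsplit.eq_prod_roots_of_monic hpm
    have : p.eval y = (p.roots.map fun a => y - a).prod := by
      conv_lhs => rw [hfac]
      rw [eval_multiset_prod, Multiset.map_map]
      simp
    have hpev : f.eval y - x₀ = p.eval y := by rw [hp]; simp
    rw [hpev, this, norm_multiset_prod', Multiset.map_map]
    rfl
  -- main argument
  intro x hx
  classical
  simp only [Set.mem_setOf_eq] at hx
  simp only [Set.mem_iUnion, Set.mem_setOf_eq, Metric.mem_closedBall]
  by_contra hcon
  push_neg at hcon
  have hbig : ∀ b ∈ p.roots, 1 < ‖x - b‖ := by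
    intro b hb
    have := hcon b (hroot b hb)
    rwa [dist_eq_norm] at this
  have hne : p.roots ≠ 0 := by
    intro h; rw [h] at hcard; simp at hcard; omega
  have hfne : p.roots.toFinset.Nonempty := by
    obtain ⟨b, hb⟩ := Multiset.exists_mem_of_ne_zero hne
    exact ⟨b, Multiset.mem_toFinset.mpr hb⟩
  obtain ⟨b₀, hb₀f, hb₀max⟩ := p.roots.toFinset.exists_max_image (fun b => ‖x - b‖) hfne
  have hb₀ : b₀ ∈ p.roots := Multiset.mem_toFinset.mp hb₀f
  set M : ℝ := ‖x - b₀‖ with hM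
  have hMmax : ∀ b ∈ p.roots, ‖x - b‖ ≤ M := fun b hb =>
    hb₀max b (Multiset.mem_toFinset.mpr hb)
  have hM1 : 1 < M := hbig b₀ hb₀
  -- the full product is ≤ r
  have hprod_le : (p.roots.map fun a => ‖x - a‖).prod ≤ r := by
    rw [← heval x]
    exact hdiam _ _ (boundedOrbit_apply hx) hx₀
  -- the product is strictly bigger than M
  have hMlt : M < r := by
    have herase : p.roots = b₀ ::ₘ p.roots.erase b₀ := (Multiset.cons_erase hb₀).symm
    have hcard' : (p.roots.erase b₀).card = d - 1 := by
      rw [Multiset.card_erase_of_mem hb₀, hcard]; rfl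
    have hene : p.roots.erase b₀ ≠ 0 := by
      intro h; rw [h] at hcard'; simp at hcard'; omega
    obtain ⟨c, hc⟩ := Multiset.exists_mem_of_ne_zero hene
    have hc' : c ∈ p.roots := Multiset.mem_of_mem_erase hc
    have h1le : (1:ℝ) < ((p.roots.erase b₀).map fun a => ‖x - a‖).prod := by
      have herase2 : p.roots.erase b₀ = c ::ₘ (p.roots.erase b₀).erase c :=
        (Multiset.cons_erase hc).symm
      rw [herase2, Multiset.map_cons, Multiset.prod_cons]
      have hrest : (1:ℝ) ≤ (((p.roots.erase b₀).erase c).map fun a => ‖x - a‖).prod := by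
        apply Multiset.one_le_prod
        intro t ht
        obtain ⟨a, ha, rfl⟩ := Multiset.mem_map.mp ht
        exact le_of_lt (hbig a (Multiset.mem_of_mem_erase (Multiset.mem_of_mem_erase ha)))
      exact lt_of_lt_of_le (hbig c hc')
        (le_mul_of_one_le_right (by positivity) hrest)
    have : M < (p.roots.map fun a => ‖x - a‖).prod := by
      rw [herase, Multiset.map_cons, Multiset.prod_cons]
      calc M = M * 1 := by ring
        _ < M * ((p.roots.erase b₀).map fun a => ‖x - a‖).prod := by
            apply mul_lt_mul_of_pos_left h1le (by linarith)
        _ = _ := rfl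
    linarith
  have hr1 : 1 < r := lt_trans hM1 hMlt
  -- pick the threshold s
  set s : ℝ := max M (r ^ ((d : ℝ)⁻¹)) with hs
  have hdpos : (0:ℝ) < d := by positivity
  have hrpow_lt : r ^ ((d : ℝ)⁻¹) < r := by
    nth_rewrite 2 [show r = r ^ (1:ℝ) by rw [Real.rpow_one]]
    apply Real.rpow_lt_rpow_of_exponent_lt hr1
    rw [inv_lt_one_iff₀]
    right
    exact_mod_cast Nat.lt_of_lt_of_le (by norm_num) hd
  have hslt : s < r := max_lt hMlt hrpow_lt
  -- there is a point of the Julia set farther than s from x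
  have hy : ∃ y : K, BoundedOrbit f y ∧ s < ‖y - x‖ := by
    by_contra hcon2
    push_neg at hcon2
    have : {x' : K | BoundedOrbit f x'} ⊆ Metric.closedBall x s := by
      intro y hy
      rw [Metric.mem_closedBall, dist_eq_norm]
      exact hcon2 y hy
    exact absurd (hmin x s this) (by linarith)
  obtain ⟨y, hyK, hys⟩ := hy
  have hyM : M < ‖y - x‖ := lt_of_le_of_lt (le_max_left _ _) hys
  -- all distances from y to roots equal ‖y - x‖
  have hyb : ∀ b ∈ p.roots, ‖y - b‖ = ‖y - x‖ := by
    intro b hb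
    have hlt : ‖x - b‖ < ‖y - x‖ := lt_of_le_of_lt (hMmax b hb) hyM
    have hne' : ‖y - x‖ ≠ ‖x - b‖ := ne_of_gt hlt
    have : y - b = (y - x) + (x - b) := by ring
    rw [this, IsUltrametricDist.norm_add_eq_max_of_norm_ne_norm hne',
      max_eq_left (le_of_lt hlt)]
  -- compute the product for y
  have hyprod : ‖f.eval y - x₀‖ = ‖y - x‖ ^ d := by
    rw [heval y]
    have : (p.roots.map fun a => ‖y - a‖) = Multiset.replicate d ‖y - x‖ := by
      rw [Multiset.eq_replicate]
      constructor
      · rw [Multiset.card_map, hcard]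
      · intro t ht
        obtain ⟨a, ha, rfl⟩ := Multiset.mem_map.mp ht
        exact hyb a ha
    rw [this, Multiset.prod_replicate]
  have hle_r : ‖f.eval y - x₀‖ ≤ r := hdiam _ _ (boundedOrbit_apply hyK) hx₀
  -- but the product exceeds r
  have hgt : r < ‖y - x‖ ^ d := by
    have h1 : r ^ ((d : ℝ)⁻¹) < ‖y - x‖ := lt_of_le_of_lt (le_max_right _ _) hys
    have h2 : (r ^ ((d : ℝ)⁻¹)) ^ d < ‖y - x‖ ^ d := by
      apply pow_lt_pow_left₀ h1 (by positivity)
      omega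
    have h3 : (r ^ ((d : ℝ)⁻¹)) ^ d = r := by
      rw [← Real.rpow_natCast (r ^ ((d : ℝ)⁻¹)) d, ← Real.rpow_mul (le_of_lt hr),
        inv_mul_cancel₀ (ne_of_gt hdpos), Real.rpow_one]
    rwa [h3] at h2
  rw [hyprod] at hle_r
  linarith
end

section
/- For every prime number p, the map f(z) = z² + 1/p has no rational preperiodic points: there is no x ∈ ℚ whose forward orbit under f is finite (equivalently, there are no m < n with f^[m](x) = f^[n](x)). -/
lemma val_step (p : ℕ) (hp : p.Prime) (y : ℚ) :
    padicValRat p (fc (1 / (p : ℚ)) y) < padicValRat p y := by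
  haveI : Fact p.Prime := ⟨hp⟩
  have hp0 : (0:ℚ) < (p:ℚ) := by exact_mod_cast hp.pos
  have hinv : padicValRat p (1 / (p : ℚ)) = -1 := by
    rw [one_div, padicValRat.inv, padicValRat.self hp.one_lt]
  have hinvne : (1 / (p : ℚ)) ≠ 0 := by positivity
  rcases eq_or_ne y 0 with rfl | hy
  · simp only [fc, ne_eq, OfNat.ofNat_ne_zero, not_false_eq_true, zero_pow, zero_add, hinv,
      padicValRat.zero]
    norm_num
  · have hy2 : y ^ 2 ≠ 0 := pow_ne_zero _ hy
    have hsumne : y ^ 2 + 1 / (p : ℚ) ≠ 0 := by positivity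
    have hvy2 : padicValRat p (y ^ 2) = 2 * padicValRat p y := by
      rw [sq, padicValRat.mul hy hy]; ring
    rcases lt_or_ge (padicValRat p y) 0 with hneg | hpos
    · have : padicValRat p (y ^ 2) < padicValRat p (1 / (p : ℚ)) := by
        rw [hvy2, hinv]; omega
      have := padicValRat.add_eq_of_lt (p := p) hsumne hy2 hinvne this
      show padicValRat p (y ^ 2 + 1 / (p : ℚ)) < _
      rw [this, hvy2]; omega
    · have : padicValRat p (1 / (p : ℚ)) < padicValRat p (y ^ 2) := by
        rw [hvy2, hinv]; omega
      have h := padicValRat.add_eq_of_lt (p := p) (by rwa [add_comm]) hinvne hy2 this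
      show padicValRat p (y ^ 2 + 1 / (p : ℚ)) < _
      rw [add_comm, h, hinv]; omega

/-- For every prime `p`, the map `f(z) = z² + 1/p` has no rational preperiodic points. -/
theorem no_preperiodic_of_one_over_prime (p : ℕ) (hp : p.Prime) (x : ℚ) :
    ¬ IsPreper (1 / (p : ℚ)) x := by
  rintro ⟨m, n, hmn, heq⟩
  have key : StrictAnti (fun k => padicValRat p ((fc (1 / (p : ℚ)))^[k] x)) := by
    apply strictAnti_nat_of_succ_lt
    intro k
    rw [Function.iterate_succ_apply']
    exact val_step p hp _
  exact absurd (congrArg (padicValRat p) heq) (key hmn).ne'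
end
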